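/- Let X be a separable metrizable space in which the boundary of every closed subset is σ-compact. Then the hyperspace CL(X) with the Vietoris topology has an ω^ω-base. -/

import Mathlib

open Set Filter Topology

/-- `CL X`: the nonempty closed subsets of `X`. -/
abbrev CL (X : Type*) [TopologicalSpace X] := {A : Set X // A.Nonempty ∧ IsClosed A}

/-- An `ω^ω`-base of neighborhoods at a point `y` of a space with topology `t`:
a neighborhood base `{U_α : α ∈ ω^ω}` with `U_β ⊆ U_α` whenever `α ≤ β` pointwise. -/
def HasOmegaOmegaBaseAt {Y : Type*} (t : TopologicalSpace Y) (y : Y) : Prop :=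
  ∃ U : (ℕ → ℕ) → Set Y, (∀ α, U α ∈ @nhds Y t y) ∧
    (∀ α β : ℕ → ℕ, α ≤ β → U β ⊆ U α) ∧
    ∀ V ∈ @nhds Y t y, ∃ α, U α ⊆ V

/-- The Vietoris topology on `CL X`, generated by the sets `U⁺` and `U⁻` for `U` open. -/
def vietoris (X : Type*) [TopologicalSpace X] : TopologicalSpace (CL X) :=
  TopologicalSpace.generateFrom
    ({S | ∃ U : Set X, IsOpen U ∧ S = {A : CL X | (A : Set X) ⊆ U}} ∪
     {S | ∃ U : Set X, IsOpen U ∧ S = {A : CL X | ((A : Set X) ∩ U).Nonempty}})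

/-- The Fell topology on `CL X`, generated by the sets `U⁻` for `U` open and
`(Kᶜ)⁺` for `K` compact. -/
def fell (X : Type*) [TopologicalSpace X] : TopologicalSpace (CL X) :=
  TopologicalSpace.generateFrom
    ({S | ∃ U : Set X, IsOpen U ∧ S = {A : CL X | ((A : Set X) ∩ U).Nonempty}} ∪
     {S | ∃ K : Set X, IsCompact K ∧ S = {A : CL X | (A : Set X) ⊆ Kᶜ}})

lemma mem_nhds_generateFrom_of_mem' {Y : Type*} {g : Set (Set Y)} {s : Set Y} {a : Y}
    (hs : s ∈ g) (ha : a ∈ s) : s ∈ @nhds Y (TopologicalSpace.generateFrom g) a := by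
  letI := TopologicalSpace.generateFrom g
  exact (TopologicalSpace.isOpen_generateFrom_of_mem hs).mem_nhds ha

lemma exists_finite_of_mem_nhds_generateFrom' {Y : Type*} {g : Set (Set Y)} {a : Y} {V : Set Y}
    (hV : V ∈ @nhds Y (TopologicalSpace.generateFrom g) a) :
    ∃ t : Set (Set Y), t.Finite ∧ (∀ s ∈ t, s ∈ g ∧ a ∈ s) ∧ ⋂₀ t ⊆ V := by
  rw [TopologicalSpace.nhds_generateFrom] at hV
  rw [← Filter.generate_eq_biInf, Filter.mem_generate_iff] at hV
  obtain ⟨t, hsub, hfin, hter⟩ := hV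
  exact ⟨t, hfin, fun s hs => ⟨(hsub hs).2, (hsub hs).1⟩, hter⟩

/-- If `X` is a separable metrizable space in which the boundary of every closed set is
σ-compact, then `(CL(X), τ_V)` has an `ω^ω`-base. -/
theorem separable_boundary_sigmaCompact_vietoris_omegaOmegaBase
    {X : Type*} [TopologicalSpace X] [TopologicalSpace.MetrizableSpace X]
    [TopologicalSpace.SeparableSpace X]
    (h : ∀ A : Set X, IsClosed A → IsSigmaCompact (frontier A)) :
    ∀ A : CL X, HasOmegaOmegaBaseAt (vietoris X) A := by
  classical
  intro A
  letI : MetricSpace X := TopologicalSpace.metrizableSpaceMetric X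
  have hXne : Nonempty X := ⟨A.2.1.choose⟩
  obtain ⟨D, hDc, hDd⟩ := TopologicalSpace.exists_countable_dense X
  obtain ⟨d, hd⟩ := hDc.exists_eq_range hDd.nonempty
  have hdense : ∀ x : X, ∀ ε : ℝ, 0 < ε → ∃ k : ℕ, dist x (d k) < ε := by
    intro x ε hε
    obtain ⟨y, hy1, hy2⟩ := (Metric.dense_iff.1 hDd) x ε hε
    rw [hd] at hy2
    obtain ⟨k, rfl⟩ := hy2
    refine ⟨k, ?_⟩
    rw [dist_comm]
    exact Metric.mem_ball.1 hy1
  obtain ⟨K, hKc, hKU⟩ := h (A : Set X) A.2.2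
  set W : ℕ → Set X := fun m => Metric.ball (d m.unpair.1) (2 / (m.unpair.2 + 1)) with hW
  set L : ℕ → Set (CL X) := fun m =>
    if ((A : Set X) ∩ W m).Nonempty then {B : CL X | ((B : Set X) ∩ W m).Nonempty}
    else Set.univ with hL
  set G : (ℕ → ℕ) → Set X := fun α =>
    interior (A : Set X) ∪ ⋃ n, Metric.thickening (1 / (α n + 1)) (K n) with hG
  set U : (ℕ → ℕ) → Set (CL X) := fun α =>
    {B : CL X | (B : Set X) ⊆ G (fun n => α (n + 1))} ∩
      ⋂ m ∈ Finset.range (α 0), L m with hU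
  have hGopen : ∀ α, IsOpen (G α) := by
    intro α
    exact isOpen_interior.union (isOpen_iUnion fun n => Metric.isOpen_thickening)
  have hSG : ∀ α, (A : Set X) ⊆ G α := by
    intro α x hx
    by_cases hxi : x ∈ interior (A : Set X)
    · exact Or.inl hxi
    · have hxf : x ∈ frontier (A : Set X) := by
        rw [A.2.2.frontier_eq]
        exact ⟨hx, hxi⟩
      rw [← hKU] at hxf
      obtain ⟨n, hn⟩ := Set.mem_iUnion.1 hxf
      refine Or.inr (Set.mem_iUnion.2 ⟨n, ?_⟩)
      exact Metric.self_subset_thickening (by positivity) _ hn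
  have hGmono : ∀ α β : ℕ → ℕ, α ≤ β → G β ⊆ G α := by
    intro α β hab
    apply Set.union_subset_union subset_rfl
    apply Set.iUnion_mono
    intro n
    apply Metric.thickening_mono
    apply one_div_le_one_div_of_le
    · positivity
    · have := hab n
      exact_mod_cast Nat.add_le_add_right (hab n) 1
  have hLnhds : ∀ m, L m ∈ @nhds (CL X) (vietoris X) A := by
    intro m
    rw [hL]
    by_cases hm : ((A : Set X) ∩ W m).Nonempty
    · simp only [if_pos hm]
      exact mem_nhds_generateFrom_of_mem' (Or.inr ⟨W m, Metric.isOpen_ball, rfl⟩) hm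
    · simp only [if_neg hm]
      exact Filter.univ_mem
  have hUnhds : ∀ α, U α ∈ @nhds (CL X) (vietoris X) A := by
    intro α
    rw [hU]
    apply Filter.inter_mem
    · exact mem_nhds_generateFrom_of_mem' (Or.inl ⟨_, hGopen _, rfl⟩) (hSG _)
    · exact (Filter.biInter_finset_mem _).2 fun m _ => hLnhds m
  have hUmono : ∀ α β : ℕ → ℕ, α ≤ β → U β ⊆ U α := by
    intro α β hab
    rw [hU]
    apply Set.inter_subset_inter
    · intro B hB
      exact hB.trans (hGmono _ _ fun n => hab (n + 1))
    · intro B hB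
      simp only [Set.mem_iInter] at hB ⊢
      intro m hm
      exact hB m (Finset.mem_range.2 (lt_of_lt_of_le (Finset.mem_range.1 hm) (hab 0)))
  have hcomb : ∀ t : Set (Set (CL X)), t.Finite →
      (∀ s ∈ t, ∃ α, U α ⊆ s) → ∃ α, U α ⊆ ⋂₀ t := by
    intro t ht
    refine Set.Finite.induction_on
      (motive := fun t _ => (∀ s ∈ t, ∃ α, U α ⊆ s) → ∃ α, U α ⊆ ⋂₀ t) t ht
      (fun _ => ⟨fun _ => 0, by simp⟩) ?_
    intro a t' _ _ ih hall
    obtain ⟨α₁, h1⟩ := hall _ (Set.mem_insert _ _)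
    obtain ⟨α₂, h2⟩ := ih fun s hs => hall s (Set.mem_insert_of_mem _ hs)
    refine ⟨fun n => max (α₁ n) (α₂ n), ?_⟩
    rw [Set.sInter_insert]
    exact Set.subset_inter ((hUmono α₁ _ fun n => le_max_left _ _).trans h1)
      ((hUmono α₂ _ fun n => le_max_right _ _).trans h2)
  have hsingle : ∀ s, s ∈ ({S | ∃ O : Set X, IsOpen O ∧ S = {B : CL X | (B : Set X) ⊆ O}} ∪
      {S | ∃ O : Set X, IsOpen O ∧ S = {B : CL X | ((B : Set X) ∩ O).Nonempty}} :
      Set (Set (CL X))) → A ∈ s → ∃ α, U α ⊆ s := by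
    rintro s (⟨O, hO, rfl⟩ | ⟨O, hO, rfl⟩) hA
    · have hAO : (A : Set X) ⊆ O := hA
      have hchoice : ∀ n, ∃ j : ℕ, Metric.thickening (1 / ((j : ℝ) + 1)) (K n) ⊆ O := by
        intro n
        have hKO : K n ⊆ O := by
          refine (Set.subset_iUnion K n).trans ?_
          rw [hKU]
          exact (A.2.2.frontier_subset).trans hAO
        obtain ⟨δ, hδ0, hδ⟩ := (hKc n).exists_thickening_subset_open hO hKO
        obtain ⟨j, hj⟩ := exists_nat_one_div_lt hδ0
        exact ⟨j, (Metric.thickening_mono hj.le _).trans hδ⟩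
      choose f hf using hchoice
      refine ⟨fun n => f (n - 1), ?_⟩
      intro B hB
      rw [hU] at hB
      have hB1 : (B : Set X) ⊆ G (fun n => f (n + 1 - 1)) := hB.1
      simp only [Nat.add_sub_cancel] at hB1
      refine Set.mem_setOf_eq ▸ hB1.trans ?_
      rw [hG]
      apply Set.union_subset
      · exact interior_subset.trans hAO
      · exact Set.iUnion_subset hf
    · obtain ⟨x, hxA, hxO⟩ := hA
      obtain ⟨ε, hε0, hball⟩ := Metric.isOpen_iff.1 hO x hxO
      obtain ⟨j, hj⟩ := exists_nat_one_div_lt (by linarith : (0 : ℝ) < ε / 3)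
      obtain ⟨k, hk⟩ := hdense x (1 / ((j : ℝ) + 1)) (by positivity)
      set m := Nat.pair k j with hm
      have hWm : W m = Metric.ball (d k) (2 / ((j : ℝ) + 1)) := by
        rw [hW, hm]
        simp [Nat.unpair_pair]
      have hp0 : (0 : ℝ) < 1 / ((j : ℝ) + 1) := by positivity
      have h2p : (2 : ℝ) / ((j : ℝ) + 1) = 2 * (1 / ((j : ℝ) + 1)) := by ring
      have hxW : x ∈ W m := by
        rw [hWm, Metric.mem_ball, h2p]
        linarith
      have hWO : W m ⊆ O := by
        rw [hWm]
        intro y hy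
        apply hball
        rw [Metric.mem_ball] at hy ⊢
        have htri := dist_triangle y (d k) x
        have hdk : dist (d k) x = dist x (d k) := dist_comm _ _
        rw [h2p] at hy
        linarith
      have hSW : ((A : Set X) ∩ W m).Nonempty := ⟨x, hxA, hxW⟩
      refine ⟨fun n => if n = 0 then m + 1 else 0, ?_⟩
      intro B hB
      rw [hU] at hB
      have hB2 := hB.2
      simp only [Set.mem_iInter] at hB2
      have hBm : B ∈ L m := hB2 m (Finset.mem_range.2 (by simp))
      rw [hL] at hBm
      simp only [if_pos hSW] at hBm
      obtain ⟨y, hyB, hyW⟩ := hBm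
      exact ⟨y, hyB, hWO hyW⟩
  refine ⟨U, hUnhds, hUmono, ?_⟩
  intro V hV
  obtain ⟨t, htfin, htmem, htsub⟩ := exists_finite_of_mem_nhds_generateFrom' hV
  obtain ⟨α, hα⟩ := hcomb t htfin fun s hs => hsingle s (htmem s hs).1 (htmem s hs).2
  exact ⟨α, hα.trans htsub⟩
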